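/- arXiv:2105.10137 — 6 statements merged into one kernel-verified Lean document; each statement's English description precedes it below -/
import Mathlib

section
/- For all integers n > k > 0, if a permutation σ of {1,...,n} can be expressed as a product of transpositions (x₁,y₁)·(x₂,y₂)·…·(x_k,y_k) where 0 < x₁ < x₂ < … < x_k < n and x_i < y_i ≤ n for all 1 ≤ i ≤ k, then σ is a product of exactly n − k disjoint cycles (i.e., σ has exactly n − k orbits on {1,...,n}, counting fixed points as cycles of length one). -/
/-- Number of cycles of a permutation, counting fixed points as cycles of length one. -/
def numCycles {n : ℕ} (σ : Equiv.Perm (Fin n)) : ℕ :=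
  σ.cycleType.card + (Finset.univ.filter fun a => σ a = a).card

section Aux

variable {n : ℕ}

lemma fixedCard (σ : Equiv.Perm (Fin n)) :
    (Finset.univ.filter fun a => σ a = a).card = n - σ.support.card := by
  have h : (Finset.univ.filter fun a => σ a = a) = σ.supportᶜ := by
    ext z; simp [Equiv.Perm.mem_support]
  rw [h, Finset.card_compl, Fintype.card_fin]

lemma supportCard_le (σ : Equiv.Perm (Fin n)) : σ.support.card ≤ n := by
  simpa using Finset.card_le_univ σ.support

/-- Key lemma: multiplying by a swap that merges a fixed point into another cycle
decreases the number of cycles by one. -/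
lemma key (σ : Equiv.Perm (Fin n)) (a b : Fin n) (ha : σ a = a) (hab : a ≠ b) :
    numCycles (Equiv.swap a b * σ) + 1 = numCycles σ := by
  by_cases hb : σ b = b
  · -- b is also fixed: swap a b and σ are disjoint
    have hdisj : Equiv.Perm.Disjoint (Equiv.swap a b) σ := by
      intro z
      by_cases hz : z = a ∨ z = b
      · rcases hz with rfl | rfl
        · exact Or.inr ha
        · exact Or.inr hb
      · push_neg at hz
        exact Or.inl (Equiv.swap_apply_of_ne_of_ne hz.1 hz.2)
    have hct := hdisj.cycleType_mul
    have hsup := hdisj.support_mul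
    have hcard : (Equiv.swap a b * σ).support.card = 2 + σ.support.card := by
      rw [hsup, Finset.card_union_of_disjoint hdisj.disjoint_support,
        Equiv.Perm.support_swap hab, Finset.card_insert_of_notMem (by simp [hab]),
        Finset.card_singleton]
    have hswapct : Multiset.card (Equiv.swap a b).cycleType = 1 :=
      Equiv.Perm.card_cycleType_eq_one.2 (Equiv.Perm.isCycle_swap hab)
    have hle := supportCard_le (Equiv.swap a b * σ)
    unfold numCycles
    rw [fixedCard, fixedCard, hct, Multiset.card_add, hswapct, hcard] at *
    omega
  · -- b is moved by σ
    set c := σ.cycleOf b with hc_def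
    have hbsupp : b ∈ σ.support := Equiv.Perm.mem_support.2 hb
    have hc : c ∈ σ.cycleFactorsFinset :=
      Equiv.Perm.cycleOf_mem_cycleFactorsFinset_iff.2 hbsupp
    have hcc : c.IsCycle := Equiv.Perm.isCycle_cycleOf σ hb
    have hcsub : c.support ⊆ σ.support := Equiv.Perm.support_cycleOf_le σ b
    have hasupp : a ∉ σ.support := by simp [Equiv.Perm.mem_support, ha]
    have hac : a ∉ c.support := fun h => hasupp (hcsub h)
    have hca : c a = a := by simpa [Equiv.Perm.mem_support] using hac
    have hbc : b ∈ c.support := by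
      rw [Equiv.Perm.mem_support_cycleOf_iff]
      exact ⟨Equiv.Perm.SameCycle.refl _ _, hbsupp⟩
    have hcb : c b ≠ b := Equiv.Perm.mem_support.1 hbc
    set ρ := σ * c⁻¹ with hρ_def
    have hdisj : Equiv.Perm.Disjoint ρ c :=
      Equiv.Perm.disjoint_mul_inv_of_mem_cycleFactorsFinset hc
    have hσeq : ρ * c = σ := by
      rw [hρ_def, inv_mul_cancel_right]
    set g := Equiv.swap a b * c with hg_def
    have hga : g a = b := by
      rw [hg_def]
      simp [hca]
    have hcinva : c⁻¹ a = a := by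
      apply c.injective; simp [hca]
    -- pointwise description of g
    have hgz : ∀ z, z ≠ a → c z = z → g z = z := by
      intro z hza hcz
      have hzb : z ≠ b := fun h => hcb (h ▸ hcz)
      rw [hg_def]
      simp [hcz, Equiv.swap_apply_of_ne_of_ne hza hzb]
    have hca' : ∀ z, c z = a → z = a := by
      intro z hz
      have := congrArg (c⁻¹ ·) hz
      simpa [hcinva] using this
    have hgsupp : ∀ z, g z ≠ z ↔ (z = a ∨ z ∈ c.support) := by
      intro z
      constructor
      · intro hgz'
        by_cases hza : z = a
        · exact Or.inl hza
        · refine Or.inr (Equiv.Perm.mem_support.2 fun hcz => hgz' (hgz z hza hcz))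
      · rintro (rfl | hz)
        · rw [hga]; exact hab.symm
        · have hza : z ≠ a := fun h => hac (h ▸ hz)
          have hcz : c z ≠ z := Equiv.Perm.mem_support.1 hz
          by_cases hczb : c z = b
          · rw [hg_def]
            simp only [Equiv.Perm.mul_apply, hczb, Equiv.swap_apply_right]
            exact fun h => hza h.symm
          · have hcza : c z ≠ a := fun h => hza (hca' z h)
            rw [hg_def]
            simp only [Equiv.Perm.mul_apply,
              Equiv.swap_apply_of_ne_of_ne hcza hczb]
            exact hcz
    -- g is a cycle
    have hcov : ∀ i : ℕ, ∃ j : ℕ, (g ^ j) a = (c ^ i) b := by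
      intro i
      induction i with
      | zero => exact ⟨1, by simpa using hga⟩
      | succ i ih =>
        obtain ⟨j, hj⟩ := ih
        by_cases hlast : c ((c ^ i) b) = b
        · refine ⟨1, ?_⟩
          rw [pow_one, hga, pow_succ', Equiv.Perm.mul_apply, hlast]
        · refine ⟨j + 1, ?_⟩
          have hmem : (c ^ i) b ∈ c.support :=
            (Equiv.Perm.pow_apply_mem_support).2 hbc
          have hna : c ((c ^ i) b) ≠ a := by
            intro h
            exact hac ((hca' _ h) ▸ hmem)
          calc (g ^ (j + 1)) a = g ((g ^ j) a) := by
                rw [pow_succ', Equiv.Perm.mul_apply]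
            _ = (c ^ (i + 1)) b := by
                rw [hj, hg_def, Equiv.Perm.mul_apply,
                  Equiv.swap_apply_of_ne_of_ne hna hlast, pow_succ',
                  Equiv.Perm.mul_apply]
    have hgcycle : g.IsCycle := by
      refine ⟨a, by rw [hga]; exact hab.symm, fun y hy => ?_⟩
      rcases (hgsupp y).1 hy with rfl | hy'
      · exact Equiv.Perm.SameCycle.refl _ _
      · obtain ⟨i, hi⟩ := hcc.exists_pow_eq hcb (Equiv.Perm.mem_support.1 hy')
        obtain ⟨j, hj⟩ := hcov i
        exact ⟨(j : ℤ), by rw [zpow_natCast, hj, hi]⟩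
    -- disjointness facts
    have hρa : ρ a = a := by
      rw [hρ_def, Equiv.Perm.mul_apply, hcinva, ha]
    have hρb : ρ b = b := by
      rcases hdisj b with h | h
      · exact h
      · exact absurd h hcb
    have hdisjg : Equiv.Perm.Disjoint ρ g := by
      intro z
      by_cases hgz' : g z = z
      · exact Or.inr hgz'
      · rcases (hgsupp z).1 hgz' with rfl | hz
        · exact Or.inl hρa
        · rcases hdisj z with h | h
          · exact Or.inl h
          · exact absurd h (Equiv.Perm.mem_support.1 hz)
    have hcomm : Equiv.swap a b * ρ = ρ * Equiv.swap a b := by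
      have hdsw : Equiv.Perm.Disjoint (Equiv.swap a b) ρ := by
        intro z
        by_cases hz : z = a ∨ z = b
        · rcases hz with rfl | rfl
          · exact Or.inr hρa
          · exact Or.inr hρb
        · push_neg at hz
          exact Or.inl (Equiv.swap_apply_of_ne_of_ne hz.1 hz.2)
      exact hdsw.commute.eq
    have hτeq : Equiv.swap a b * σ = ρ * g := by
      rw [hg_def, ← hσeq, ← mul_assoc, hcomm, mul_assoc]
    -- cycle type cards
    have hctτ : Multiset.card (Equiv.swap a b * σ).cycleType
        = Multiset.card σ.cycleType := by
      rw [hτeq, hdisjg.cycleType_mul, ← hσeq, hdisj.cycleType_mul, Multiset.card_add,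
        Multiset.card_add, Equiv.Perm.card_cycleType_eq_one.2 hgcycle,
        Equiv.Perm.card_cycleType_eq_one.2 hcc]
    -- support cards
    have hgsupp' : g.support = insert a c.support := by
      ext z
      rw [Equiv.Perm.mem_support, hgsupp z, Finset.mem_insert]
    have hsτ : (Equiv.swap a b * σ).support.card = σ.support.card + 1 := by
      rw [hτeq, hdisjg.support_mul, ← hσeq, hdisj.support_mul,
        Finset.card_union_of_disjoint hdisjg.disjoint_support,
        Finset.card_union_of_disjoint hdisj.disjoint_support,
        hgsupp', Finset.card_insert_of_notMem hac]
      omega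
    have hle := supportCard_le (Equiv.swap a b * σ)
    unfold numCycles
    rw [fixedCard, fixedCard, hctτ, hsτ] at *
    omega

lemma prod_fixed {β : Type*} (p : β) :
    ∀ l : List (Equiv.Perm β), (∀ g ∈ l, g p = p) → l.prod p = p := by
  intro l
  induction l with
  | nil => intro _; rfl
  | cons g l ih =>
    intro h
    rw [List.prod_cons, Equiv.Perm.mul_apply, ih (fun g hg => h g (List.mem_cons_of_mem _ hg)),
      h g List.mem_cons_self]

lemma main_aux : ∀ (k : ℕ) (x y : Fin k → Fin n), StrictMono x → (∀ i, x i < y i) →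
    numCycles ((List.ofFn fun i => Equiv.swap (x i) (y i)).prod) + k = n := by
  intro k
  induction k with
  | zero =>
    intro x y _ _
    simp only [List.ofFn_zero, List.prod_nil, Nat.add_zero]
    unfold numCycles
    rw [fixedCard]
    have : (1 : Equiv.Perm (Fin n)).support.card = 0 := by simp
    simp [Equiv.Perm.cycleType_one, this]
  | succ k ih =>
    intro x y hx hxy
    have hrec := ih (fun i => x i.succ) (fun i => y i.succ)
      (fun i j hij => hx (Fin.succ_lt_succ_iff.2 hij)) (fun i => hxy i.succ)
    set σ' := (List.ofFn fun i : Fin k => Equiv.swap (x i.succ) (y i.succ)).prod with hσ'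
    have hfix : σ' (x 0) = x 0 := by
      apply prod_fixed
      intro g hg
      rw [List.mem_ofFn] at hg
      obtain ⟨i, rfl⟩ := hg
      have h1 : x 0 ≠ x i.succ := ne_of_lt (hx (Fin.succ_pos i))
      have h2 : x 0 ≠ y i.succ := ne_of_lt ((hx (Fin.succ_pos i)).trans (hxy i.succ))
      exact Equiv.swap_apply_of_ne_of_ne h1 h2
    have hsplit : (List.ofFn fun i : Fin (k + 1) => Equiv.swap (x i) (y i)).prod
        = Equiv.swap (x 0) (y 0) * σ' := by
      rw [List.ofFn_succ, List.prod_cons]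
    rw [hsplit]
    have := key σ' (x 0) (y 0) hfix (ne_of_lt (hxy 0))
    omega

end Aux

theorem stmt0 (n k : ℕ) (hk : 0 < k) (hkn : k < n)
    (x y : Fin k → Fin n) (hx : StrictMono x) (hxy : ∀ i, x i < y i)
    (σ : Equiv.Perm (Fin n))
    (hσ : σ = (List.ofFn fun i => Equiv.swap (x i) (y i)).prod) :
    numCycles σ = n - k := by
  have := main_aux k x y hx hxy
  rw [hσ]
  omega
end

section
/- For all integers n > k > 0, every permutation σ of {1,...,n} that is a product of exactly n − k disjoint cycles admits an expression as a product of transpositions (x₁,y₁)·(x₂,y₂)·…·(x_k,y_k) with 0 < x₁ < x₂ < … < x_k < n and x_i < y_i ≤ n for all 1 ≤ i ≤ k. -/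
open Equiv Equiv.Perm Finset

lemma numCycles_eq {n : ℕ} (σ : Equiv.Perm (Fin n)) :
    numCycles σ = Multiset.card σ.cycleType + (n - σ.support.card) := by
  have h : (Finset.univ.filter fun a => σ a = a) = σ.supportᶜ := by
    ext a; simp [Equiv.Perm.mem_support]
  rw [numCycles, h, Finset.card_compl, Fintype.card_fin]

lemma card_support_le {n : ℕ} (σ : Equiv.Perm (Fin n)) : σ.support.card ≤ n := by
  simpa using Finset.card_le_univ σ.support

lemma two_card_le_sum {m : Multiset ℕ} (h : ∀ x ∈ m, 2 ≤ x) :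
    2 * Multiset.card m ≤ m.sum := by
  induction m using Multiset.induction with
  | empty => simp
  | cons a s ih =>
    simp only [Multiset.sum_cons, Multiset.card_cons]
    have := h a (Multiset.mem_cons_self a s)
    have := ih (fun x hx => h x (Multiset.mem_cons_of_mem hx))
    omega

lemma numCycles_eq_n {n : ℕ} {σ : Equiv.Perm (Fin n)} (h : numCycles σ = n) : σ = 1 := by
  rw [numCycles_eq] at h
  have h1 := sum_cycleType σ
  have h2 := two_card_le_sum (fun x hx => two_le_of_mem_cycleType (σ := σ) hx)
  have h3 := card_support_le σ
  have h4 : σ.support.card = 0 := by omega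
  rw [Finset.card_eq_zero, Equiv.Perm.support_eq_empty_iff] at h4
  exact h4

lemma numCycles_swap_mul {n : ℕ} {σ : Equiv.Perm (Fin n)} {x : Fin n} (hx : σ x ≠ x) :
    numCycles (Equiv.swap x (σ x) * σ) = numCycles σ + 1 := by
  classical
  set c := σ.cycleOf x with hc
  have hcx : c x = σ x := σ.cycleOf_apply_self x
  set τ := c⁻¹ * σ with hτ
  have hστ : σ = c * τ := by rw [hτ]; group
  have hd : Disjoint c τ := by
    intro a
    by_cases h : σ.SameCycle x a
    · right
      have h' : σ.SameCycle x (σ a) := h.trans (SameCycle.refl σ a).apply_right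
      show c⁻¹ (σ a) = a
      have : c a = σ a := h.cycleOf_apply
      rw [← this, Equiv.Perm.inv_def, Equiv.symm_apply_apply]
    · left; exact cycleOf_apply_of_not_sameCycle h
  have hcyc : c.IsCycle := isCycle_cycleOf σ hx
  have hdx : c x ≠ x := by rw [hcx]; exact hx
  have hxsc : x ∈ c.support := Equiv.Perm.mem_support.mpr hdx
  set d := Equiv.swap x (c x) * c with hdd
  have hsubd : d.support ⊆ c.support := fun a ha =>
    (Equiv.Perm.mem_support_swap_mul_imp_mem_support_ne ha).1
  have hddτ : Disjoint d τ := by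
    rw [Equiv.Perm.disjoint_iff_disjoint_support] at hd ⊢
    exact _root_.Disjoint.mono_left hsubd hd
  have hσ' : Equiv.swap x (σ x) * σ = d * τ := by
    rw [hdd, hcx, mul_assoc, ← hστ]
  have hcT : c.cycleType = {c.support.card} := hcyc.cycleType
  have hsle : c.support.card + τ.support.card ≤ n := by
    have := card_support_le σ
    rwa [hστ, hd.card_support_mul] at this
  have hc2 : 2 ≤ c.support.card := hcyc.two_le_card_support
  rw [hσ', numCycles_eq, numCycles_eq, hστ, hd.cycleType_mul, hd.card_support_mul,
    hddτ.cycleType_mul, hddτ.card_support_mul, hcT]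
  by_cases hcc : c (c x) = x
  · have hce := hcyc.eq_swap_of_apply_apply_eq_self hdx hcc
    set b := c x with hb
    have hde : d = 1 := by
      rw [hdd, hce]
      exact Equiv.swap_mul_self _ _
    have hc2' : c.support.card = 2 := by
      rw [hce]
      exact Equiv.Perm.card_support_swap (Ne.symm hdx)
    rw [hde]
    simp only [Equiv.Perm.cycleType_one, Equiv.Perm.support_one, Finset.card_empty,
      Multiset.card_add, Multiset.card_singleton, Multiset.card_zero]
    omega
  · have hdcyc : d.IsCycle := hcyc.swap_mul hdx hcc
    have hds : d.support = c.support \ {x} := Equiv.Perm.support_swap_mul_eq c x hcc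
    have hdsc : d.support.card = c.support.card - 1 := by
      rw [hds, Finset.sdiff_singleton_eq_erase, Finset.card_erase_of_mem hxsc]
    rw [hdcyc.cycleType, hdsc]
    simp only [Multiset.card_add, Multiset.card_singleton, Multiset.coe_singleton]
    omega

lemma aux {n : ℕ} : ∀ (k : ℕ) (σ : Equiv.Perm (Fin n)), numCycles σ + k = n →
    ∃ x y : Fin k → Fin n, StrictMono x ∧ (∀ i, x i < y i) ∧ (∀ i, x i ∈ σ.support) ∧
      σ = (List.ofFn fun i => Equiv.swap (x i) (y i)).prod := by
  intro k
  induction k with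
  | zero =>
    intro σ hσ
    refine ⟨Fin.elim0, Fin.elim0, fun i => i.elim0, fun i => i.elim0, fun i => i.elim0, ?_⟩
    have h1 : σ = 1 := numCycles_eq_n (by omega)
    subst h1
    simp
  | succ k ih =>
    intro σ hσ
    have hσ1 : σ ≠ 1 := by
      rintro rfl
      rw [numCycles_eq] at hσ
      simp only [Equiv.Perm.cycleType_one, Equiv.Perm.support_one, Finset.card_empty,
        Multiset.card_zero] at hσ
      omega
    have hne : σ.support.Nonempty := by
      rw [Finset.nonempty_iff_ne_empty, Ne, Equiv.Perm.support_eq_empty_iff]; exact hσ1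
    set m := σ.support.min' hne with hm
    have hmem : m ∈ σ.support := σ.support.min'_mem hne
    have hmx : σ m ≠ m := Equiv.Perm.mem_support.mp hmem
    set σ' := Equiv.swap m (σ m) * σ with hσ'def
    have hnum : numCycles σ' = numCycles σ + 1 := numCycles_swap_mul hmx
    obtain ⟨x', y', hx'mono, hxy', hsupp', hprod'⟩ := ih σ' (by omega)
    have hsub : ∀ a ∈ σ'.support, m < a := by
      intro a ha
      have h2 := Equiv.Perm.mem_support_swap_mul_imp_mem_support_ne ha
      exact lt_of_le_of_ne (σ.support.min'_le a h2.1) (Ne.symm h2.2)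
    refine ⟨Fin.cons m x', Fin.cons (σ m) y', ?_, ?_, ?_, ?_⟩
    · intro i j hij
      induction j using Fin.cases with
      | zero => exact absurd hij (Fin.not_lt_zero _)
      | succ j =>
        induction i using Fin.cases with
        | zero =>
          simp only [Fin.cons_zero, Fin.cons_succ]
          exact hsub _ (hsupp' j)
        | succ i =>
          simp only [Fin.cons_succ]
          exact hx'mono (by simpa using hij)
    · intro i
      induction i using Fin.cases with
      | zero =>
        simp only [Fin.cons_zero]
        have : σ m ∈ σ.support := Equiv.Perm.apply_mem_support.mpr hmem
        exact lt_of_le_of_ne (σ.support.min'_le _ this) (Ne.symm hmx)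
      | succ i => simpa using hxy' i
    · intro i
      induction i using Fin.cases with
      | zero => simpa using hmem
      | succ i =>
        simp only [Fin.cons_succ]
        exact (Equiv.Perm.mem_support_swap_mul_imp_mem_support_ne (hsupp' i)).1
    · rw [List.ofFn_succ]
      simp only [Fin.cons_zero, Fin.cons_succ, List.prod_cons]
      rw [← hprod', hσ'def, ← mul_assoc, Equiv.swap_mul_self, one_mul]

theorem stmt1 (n k : ℕ) (hk : 0 < k) (hkn : k < n)
    (σ : Equiv.Perm (Fin n)) (hσ : numCycles σ = n - k) :
    ∃ x y : Fin k → Fin n, StrictMono x ∧ (∀ i, x i < y i) ∧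
      σ = (List.ofFn fun i => Equiv.swap (x i) (y i)).prod := by
  obtain ⟨x, y, h1, h2, _, h4⟩ := aux k σ (by omega)
  exact ⟨x, y, h1, h2, h4⟩
end

section
/- For all integers n > k > 0, if a permutation σ of {1,...,n} admits an expression as a product of transpositions (x₁,y₁)·…·(x_k,y_k) with 0 < x₁ < … < x_k < n and x_i < y_i ≤ n for all i, then this expression is unique: the sequences (x_i) and (y_i) are uniquely determined by σ. -/
private lemma prod_fix {α : Type*} (l : List (Equiv.Perm α)) (z : α)
    (h : ∀ f ∈ l, f z = z) : l.prod z = z := by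
  induction l with
  | nil => rfl
  | cons a l ih =>
      simp only [List.prod_cons, Equiv.Perm.mul_apply]
      rw [ih (fun f hf => h f (List.mem_cons_of_mem a hf)), h a List.mem_cons_self]

private lemma key_s2 (n : ℕ) : ∀ (k : ℕ) (x y x' y' : Fin k → Fin n),
    StrictMono x → (∀ i, x i < y i) →
    StrictMono x' → (∀ i, x' i < y' i) →
    (List.ofFn fun i => Equiv.swap (x i) (y i)).prod =
      (List.ofFn fun i => Equiv.swap (x' i) (y' i)).prod →
    x = x' ∧ y = y' := by
  intro k
  induction k with
  | zero =>
      intro x y x' y' _ _ _ _ _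
      exact ⟨funext fun i => i.elim0, funext fun i => i.elim0⟩
  | succ m ih =>
      intro x y x' y' hx hxy hx' hxy' heq
      -- split off head
      have hsplit : ∀ (u v : Fin (m+1) → Fin n), StrictMono u → (∀ i, u i < v i) →
          (List.ofFn fun i => Equiv.swap (u i) (v i)).prod =
          Equiv.swap (u 0) (v 0) *
            (List.ofFn fun i : Fin m => Equiv.swap (u i.succ) (v i.succ)).prod := by
        intro u v _ _
        rw [List.ofFn_succ, List.prod_cons]
      have hfix : ∀ (u v : Fin (m+1) → Fin n), StrictMono u → (∀ i, u i < v i) →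
          ∀ z : Fin n, z < u 0 →
          (List.ofFn fun i => Equiv.swap (u i) (v i)).prod z = z := by
        intro u v hu huv z hz
        apply prod_fix
        intro f hf
        simp only [List.mem_ofFn] at hf
        obtain ⟨i, rfl⟩ := hf
        have h1 : z ≠ u i := ne_of_lt (lt_of_lt_of_le hz (hu.monotone (Fin.zero_le i)))
        have h2 : z ≠ v i := ne_of_lt (lt_trans (lt_of_lt_of_le hz (hu.monotone (Fin.zero_le i))) (huv i))
        exact Equiv.swap_apply_of_ne_of_ne h1 h2
      have happ : ∀ (u v : Fin (m+1) → Fin n), StrictMono u → (∀ i, u i < v i) →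
          (List.ofFn fun i => Equiv.swap (u i) (v i)).prod (u 0) = v 0 := by
        intro u v hu huv
        rw [hsplit u v hu huv, Equiv.Perm.mul_apply]
        have : (List.ofFn fun i : Fin m => Equiv.swap (u i.succ) (v i.succ)).prod (u 0) = u 0 := by
          apply prod_fix
          intro f hf
          simp only [List.mem_ofFn] at hf
          obtain ⟨i, rfl⟩ := hf
          have h0 : u 0 < u i.succ := hu (Fin.succ_pos i)
          exact Equiv.swap_apply_of_ne_of_ne (ne_of_lt h0) (ne_of_lt (lt_trans h0 (huv i.succ)))
        rw [this, Equiv.swap_apply_left]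
      -- x 0 = x' 0
      have hx0 : x 0 = x' 0 := by
        by_contra hne
        rcases lt_or_gt_of_ne hne with h | h
        · have := hfix x' y' hx' hxy' (x 0) h
          rw [← heq, happ x y hx hxy] at this
          exact absurd this.symm (ne_of_lt (hxy 0))
        · have := hfix x y hx hxy (x' 0) h
          rw [heq, happ x' y' hx' hxy'] at this
          exact absurd this.symm (ne_of_lt (hxy' 0))
      have hy0 : y 0 = y' 0 := by
        have h1 := happ x y hx hxy
        have h2 := happ x' y' hx' hxy'
        rw [← hx0] at h2
        rw [heq, h2] at h1
        exact h1.symm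
      -- cancel swap and use IH
      have hmono : ∀ (u : Fin (m+1) → Fin n), StrictMono u →
          StrictMono (fun i : Fin m => u i.succ) := by
        intro u hu i j hij
        exact hu (Fin.succ_lt_succ_iff.mpr hij)
      have htail : (List.ofFn fun i : Fin m => Equiv.swap (x i.succ) (y i.succ)).prod =
          (List.ofFn fun i : Fin m => Equiv.swap (x' i.succ) (y' i.succ)).prod := by
        have e1 := hsplit x y hx hxy
        have e2 := hsplit x' y' hx' hxy'
        rw [e1, e2, hx0, hy0] at heq
        exact mul_left_cancel heq
      obtain ⟨ex, ey⟩ := ih (fun i => x i.succ) (fun i => y i.succ)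
        (fun i => x' i.succ) (fun i => y' i.succ)
        (hmono x hx) (fun i => hxy i.succ) (hmono x' hx') (fun i => hxy' i.succ) htail
      constructor
      · funext i
        refine Fin.cases hx0 (fun j => ?_) i
        exact congrFun ex j
      · funext i
        refine Fin.cases hy0 (fun j => ?_) i
        exact congrFun ey j

theorem stmt2 (n k : ℕ) (hk : 0 < k) (hkn : k < n)
    (x y x' y' : Fin k → Fin n)
    (hx : StrictMono x) (hxy : ∀ i, x i < y i)
    (hx' : StrictMono x') (hxy' : ∀ i, x' i < y' i)
    (heq : (List.ofFn fun i => Equiv.swap (x i) (y i)).prod =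
           (List.ofFn fun i => Equiv.swap (x' i) (y' i)).prod) :
    x = x' ∧ y = y' :=
  key_s2 n k x y x' y' hx hxy hx' hxy' heq
end

section
/- For every integer ℓ ≥ 2, the number of boat sequences involving ℓ people equals ℓ!·((ℓ−1)!)²/2^{ℓ−1}, where a boat sequence is encoded (via the rank map r) as a pair of sequences: a sequence (S₁,...,S_{ℓ−1}) with S_i a 2-element subset of {1,...,ℓ+1−i}, and a sequence (t₁,...,t_{ℓ−2}) with t_i an element of {1,...,i+1}. Equivalently, the product ∏_{i=1}^{ℓ−1} binom(ℓ+1−i, 2) · ∏_{i=1}^{ℓ−2} (i+1) = ℓ!·((ℓ−1)!)²/2^{ℓ−1}. -/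
lemma key_s6 (n : ℕ) :
    (∏ i ∈ Finset.range (n + 1), ((n + 2 - i).choose 2 : ℚ)) *
      (∏ i ∈ Finset.range n, ((i : ℚ) + 2)) =
    ((n + 2).factorial : ℚ) * ((n + 1).factorial : ℚ) ^ 2 / 2 ^ (n + 1) := by
  induction n with
  | zero => norm_num [Nat.factorial]
  | succ n ih =>
      have hshift : (∏ i ∈ Finset.range (n + 2), ((n + 3 - i).choose 2 : ℚ))
          = (∏ i ∈ Finset.range (n + 1), ((n + 2 - i).choose 2 : ℚ)) *
            ((n + 3).choose 2 : ℚ) := by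
        rw [Finset.prod_range_succ']
        congr 1
        exact Finset.prod_congr rfl (fun i _ => by congr 2; omega)
      have hd : 2 ∣ (n + 3) * (n + 2) := by
        rw [mul_comm]; exact (Nat.even_mul_succ_self (n + 2)).two_dvd
      have hnat : (n + 3).choose 2 * 2 = (n + 3) * (n + 2) := by
        rw [Nat.choose_two_right, show n + 3 - 1 = n + 2 from rfl]
        exact Nat.div_mul_cancel hd
      have hC : ((n + 3).choose 2 : ℚ) = (n + 3) * (n + 2) / 2 := by
        rw [eq_div_iff (two_ne_zero)]
        exact_mod_cast hnat
      have h3 : (n + 1 + 2 : ℕ) = n + 3 := by omega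
      rw [h3, Finset.prod_range_succ (fun i => ((i : ℚ) + 2)) n, hshift, hC]
      have e1 : ((n + 1 + 2).factorial : ℚ) = (n + 3) * ((n + 2).factorial : ℚ) := by
        rw [show n + 1 + 2 = n + 3 from rfl, show n + 3 = (n + 2) + 1 from rfl,
          Nat.factorial_succ]
        push_cast; ring
      have e2 : ((n + 1 + 1).factorial : ℚ) = (n + 2) * ((n + 1).factorial : ℚ) := by
        rw [show n + 1 + 1 = (n + 1) + 1 from rfl, Nat.factorial_succ]
        push_cast; ring
      rw [e1, e2]
      have h2pos : (2 : ℚ) ^ (n + 1) ≠ 0 := by positivity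
      calc (∏ i ∈ Finset.range (n + 1), ((n + 2 - i).choose 2 : ℚ)) *
              ((n + 3 : ℚ) * (n + 2) / 2) *
              ((∏ i ∈ Finset.range n, ((i : ℚ) + 2)) * ((n : ℚ) + 2))
          = ((∏ i ∈ Finset.range (n + 1), ((n + 2 - i).choose 2 : ℚ)) *
              (∏ i ∈ Finset.range n, ((i : ℚ) + 2))) *
              ((n + 3 : ℚ) * ((n : ℚ) + 2) ^ 2 / 2) := by ring
        _ = ((n + 2).factorial : ℚ) * ((n + 1).factorial : ℚ) ^ 2 / 2 ^ (n + 1) *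
              ((n + 3 : ℚ) * ((n : ℚ) + 2) ^ 2 / 2) := by rw [ih]
        _ = (n + 3 : ℚ) * (((n : ℚ) + 2) * ((n + 1).factorial : ℚ)) *
              (((n : ℚ) + 2) * ((n + 1).factorial : ℚ)) ^ 2 / 2 ^ (n + 1 + 1) := by
              have hF : ((n + 2).factorial : ℚ) = ((n : ℚ) + 2) * ((n + 1).factorial : ℚ) := by
                rw [show n + 2 = (n + 1) + 1 from rfl, Nat.factorial_succ]; push_cast; ring
              rw [hF, pow_succ]; field_simp; ring

theorem stmt6 (ℓ : ℕ) (hℓ : 2 ≤ ℓ) :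
    ((Nat.card ((∀ i : Fin (ℓ - 1), {s : Finset (Fin (ℓ - i.val)) // s.card = 2}) ×
        (∀ i : Fin (ℓ - 2), Fin (i.val + 2))) : ℚ) =
      (ℓ.factorial : ℚ) * ((ℓ - 1).factorial : ℚ) ^ 2 / 2 ^ (ℓ - 1)) ∧
    ((∏ i ∈ Finset.Icc 1 (ℓ - 1), ((ℓ + 1 - i).choose 2 : ℚ)) *
        ∏ i ∈ Finset.Icc 1 (ℓ - 2), ((i : ℚ) + 1) =
      (ℓ.factorial : ℚ) * ((ℓ - 1).factorial : ℚ) ^ 2 / 2 ^ (ℓ - 1)) := by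
  obtain ⟨n, rfl⟩ : ∃ n, ℓ = n + 2 := ⟨ℓ - 2, by omega⟩
  have h1 : n + 2 - 1 = n + 1 := by omega
  have h2 : n + 2 - 2 = n := by omega
  constructor
  · rw [Nat.card_prod, Nat.card_pi, Nat.card_pi]
    have c1 : ∀ i : Fin (n + 2 - 1), Nat.card {s : Finset (Fin (n + 2 - i.val)) // s.card = 2}
        = (n + 2 - i.val).choose 2 := by
      intro i
      rw [Nat.card_eq_fintype_card]
      simpa using Fintype.card_finset_len (Fin (n + 2 - i.val)) 2
    simp only [c1, Nat.card_eq_fintype_card, Fintype.card_fin]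
    push_cast
    rw [Fin.prod_univ_eq_prod_range (fun i => ((n + 2 - i).choose 2 : ℚ)),
      Fin.prod_univ_eq_prod_range (fun i => ((i : ℚ) + 2)), h1, h2]
    exact key_s6 n
  · rw [h1, h2, ← Finset.Ico_add_one_right_eq_Icc, ← Finset.Ico_add_one_right_eq_Icc,
      Finset.prod_Ico_eq_prod_range, Finset.prod_Ico_eq_prod_range]
    simp only [Nat.add_sub_cancel]
    have e1 : ∏ i ∈ Finset.range (n + 1), ((n + 2 + 1 - (1 + i)).choose 2 : ℚ)
        = ∏ i ∈ Finset.range (n + 1), ((n + 2 - i).choose 2 : ℚ) :=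
      Finset.prod_congr rfl (fun i _ => by congr 2; omega)
    have e2 : ∏ i ∈ Finset.range n, (((1 + i : ℕ) : ℚ) + 1)
        = ∏ i ∈ Finset.range n, ((i : ℚ) + 2) :=
      Finset.prod_congr rfl (fun i _ => by push_cast; ring)
    rw [e1, e2, key_s6 n]
end

section
/- Let n ≥ 2. The map sending a sequence of transpositions ((x₁,y₁),…,(x_k,y_k)) with 0 < x₁ < … < x_k < n and x_i < y_i ≤ n to the product σ = (x₁,y₁)·…·(x_k,y_k) ∈ S_n is injective. -/
private lemma fixA {n : ℕ} (L : List (Fin n × Fin n))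
    (hlt : ∀ p ∈ L, p.1 < p.2) (t : Fin n) (ht : ∀ p ∈ L, t < p.1) :
    (L.map fun p => Equiv.swap p.1 p.2).prod t = t := by
  induction L with
  | nil => simp
  | cons p T ih =>
    simp only [List.map_cons, List.prod_cons, Equiv.Perm.mul_apply]
    rw [ih (fun q hq => hlt q (List.mem_cons_of_mem _ hq))
        (fun q hq => ht q (List.mem_cons_of_mem _ hq))]
    exact Equiv.swap_apply_of_ne_of_ne (ne_of_lt (ht p (List.mem_cons_self)))
      (ne_of_lt ((ht p (List.mem_cons_self)).trans (hlt p (List.mem_cons_self))))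

private lemma chainLt {n : ℕ} : ∀ (a : Fin n × Fin n) (T : List (Fin n × Fin n)),
    List.Chain' (fun p q : Fin n × Fin n => p.1 < q.1) (a :: T) → ∀ p ∈ T, a.1 < p.1 := by
  intro a T
  induction T generalizing a with
  | nil => simp
  | cons b T ih =>
    intro h p hp
    simp only [List.Chain', List.isChain_cons_cons] at h
    rcases List.mem_cons.mp hp with rfl | hp
    · exact h.1
    · exact h.1.trans (ih b h.2 p hp)

private lemma headB {n : ℕ} (x y : Fin n) (T : List (Fin n × Fin n))
    (hc : List.Chain' (fun p q : Fin n × Fin n => p.1 < q.1) ((x, y) :: T))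
    (hlt : ∀ p ∈ ((x, y) :: T), p.1 < p.2) :
    ((((x, y) :: T).map fun p => Equiv.swap p.1 p.2).prod) x = y := by
  simp only [List.map_cons, List.prod_cons, Equiv.Perm.mul_apply]
  rw [fixA T (fun q hq => hlt q (List.mem_cons_of_mem _ hq)) x (chainLt _ _ hc)]
  exact Equiv.swap_apply_left x y

theorem stmt14 (n : ℕ) (hn : 2 ≤ n)
    (L₁ L₂ : List (Fin n × Fin n))
    (h₁ : L₁.Chain' fun p q => p.1 < q.1) (h₁' : ∀ p ∈ L₁, p.1 < p.2)
    (h₂ : L₂.Chain' fun p q => p.1 < q.1) (h₂' : ∀ p ∈ L₂, p.1 < p.2)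
    (heq : (L₁.map fun p => Equiv.swap p.1 p.2).prod =
           (L₂.map fun p => Equiv.swap p.1 p.2).prod) :
    L₁ = L₂ := by
  induction L₁ generalizing L₂ with
  | nil =>
    cases L₂ with
    | nil => rfl
    | cons b T₂ =>
      exfalso
      obtain ⟨x, y⟩ := b
      have hb := headB x y T₂ h₂ h₂'
      rw [← heq] at hb
      simp at hb
      exact absurd hb (ne_of_lt (h₂' (x, y) (List.mem_cons_self)))
  | cons a T₁ ih =>
    obtain ⟨x₁, y₁⟩ := a
    cases L₂ with
    | nil =>
      exfalso
      have hb := headB x₁ y₁ T₁ h₁ h₁'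
      rw [heq] at hb
      simp at hb
      exact absurd hb (ne_of_lt (h₁' (x₁, y₁) (List.mem_cons_self)))
    | cons b T₂ =>
      obtain ⟨x₂, y₂⟩ := b
      have hb₁ := headB x₁ y₁ T₁ h₁ h₁'
      have hb₂ := headB x₂ y₂ T₂ h₂ h₂'
      have hx : x₁ = x₂ := by
        rcases lt_trichotomy x₁ x₂ with h | h | h
        · exfalso
          have hfix : (((x₂, y₂) :: T₂).map fun p => Equiv.swap p.1 p.2).prod x₁ = x₁ := by
            apply fixA _ h₂'
            intro p hp
            rcases List.mem_cons.mp hp with rfl | hp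
            · exact h
            · exact h.trans (chainLt _ _ h₂ p hp)
          rw [← heq, hb₁] at hfix
          exact absurd hfix (ne_of_gt (h₁' (x₁, y₁) (List.mem_cons_self)))
        · exact h
        · exfalso
          have hfix : (((x₁, y₁) :: T₁).map fun p => Equiv.swap p.1 p.2).prod x₂ = x₂ := by
            apply fixA _ h₁'
            intro p hp
            rcases List.mem_cons.mp hp with rfl | hp
            · exact h
            · exact h.trans (chainLt _ _ h₁ p hp)
          rw [heq, hb₂] at hfix
          exact absurd hfix (ne_of_gt (h₂' (x₂, y₂) (List.mem_cons_self)))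
      subst hx
      have hy : y₁ = y₂ := by rw [← hb₁, ← hb₂, heq]
      subst hy
      have htail : (T₁.map fun p => Equiv.swap p.1 p.2).prod =
          (T₂.map fun p => Equiv.swap p.1 p.2).prod := by
        simp only [List.map_cons, List.prod_cons] at heq
        exact mul_left_cancel heq
      rw [ih T₂ h₁.tail (fun p hp => h₁' p (List.mem_cons_of_mem _ hp)) h₂.tail
        (fun p hp => h₂' p (List.mem_cons_of_mem _ hp)) htail]
end

section
/- For every integer n ≥ 1, the number of sequences ((x₁,y₁),…,(x_k,y_k)) of transpositions with 0 < x₁ < … < x_k < n, x_i < y_i ≤ n, and exactly k factors, equals stirling1(n, n−k) (the unsigned Stirling number of the first kind); equivalently, the number of such sequences is ∑ over subsets {x₁<…<x_k} ⊆ {1,...,n−1} of ∏_i (n − x_i). -/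
/-- Unsigned Stirling numbers of the first kind. -/
def stirling1 : ℕ → ℕ → ℕ
  | 0, 0 => 1
  | 0, _ + 1 => 0
  | _ + 1, 0 => 0
  | n + 1, m + 1 => stirling1 n m + n * stirling1 n (m + 1)

open Finset

/-- Elementary symmetric sum: `e_k(1, 2, ..., m)`. -/
def Ek (m k : ℕ) : ℕ := ∑ s ∈ powersetCard k (Icc 1 m), ∏ x ∈ s, x

lemma Ek_zero (m : ℕ) : Ek m 0 = 1 := by
  simp [Ek]

lemma Ek_of_gt {m k : ℕ} (h : m < k) : Ek m k = 0 := by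
  rw [Ek, powersetCard_eq_empty.2 (by simpa using h), sum_empty]

lemma Ek_succ (m k : ℕ) : Ek (m + 1) (k + 1) = Ek m (k + 1) + (m + 1) * Ek m k := by
  classical
  have hnot : (m + 1) ∉ Icc 1 m := by simp
  have hins : Icc 1 (m + 1) = insert (m + 1) (Icc 1 m) :=
    (Finset.insert_Icc_right_eq_Icc_add_one (by omega)).symm
  have hdisj : Disjoint (powersetCard (k + 1) (Icc 1 m))
      ((powersetCard k (Icc 1 m)).image (insert (m + 1))) := by
    rw [Finset.disjoint_left]
    intro t ht ht'
    obtain ⟨u, _, rfl⟩ := Finset.mem_image.1 ht'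
    have := (Finset.mem_powersetCard.1 ht).1 (Finset.mem_insert_self _ _)
    exact hnot this
  rw [Ek, hins, powersetCard_succ_insert hnot, sum_union hdisj, sum_image ?hinj]
  case hinj =>
    intro x hx y hy hxy
    have hx0 : (m + 1) ∉ x := fun h => hnot ((Finset.mem_powersetCard.1 hx).1 h)
    have hy0 : (m + 1) ∉ y := fun h => hnot ((Finset.mem_powersetCard.1 hy).1 h)
    rw [← Finset.erase_insert hx0, ← Finset.erase_insert hy0, hxy]
  have : ∀ u ∈ powersetCard k (Icc 1 m),
      ∏ x ∈ insert (m + 1) u, x = (m + 1) * ∏ x ∈ u, x := by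
    intro u hu
    have : (m + 1) ∉ u := fun h => hnot ((Finset.mem_powersetCard.1 hu).1 h)
    rw [Finset.prod_insert this]
  rw [Finset.sum_congr rfl this, ← Finset.mul_sum]
  rfl

lemma stirling1_eq_zero : ∀ n m : ℕ, n < m → stirling1 n m = 0
  | 0, _ + 1, _ => rfl
  | n + 1, m + 1, h => by
    rw [stirling1, stirling1_eq_zero n m (by omega),
      stirling1_eq_zero n (m + 1) (by omega), Nat.mul_zero]

lemma stirling1_self : ∀ n : ℕ, stirling1 n n = 1
  | 0 => rfl
  | n + 1 => by
    rw [stirling1, stirling1_self n, stirling1_eq_zero n (n + 1) (by omega), Nat.mul_zero]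

lemma stirling1_Ek : ∀ m : ℕ, ∀ k ≤ m, stirling1 (m + 1) (m + 1 - k) = Ek m k := by
  intro m
  induction m with
  | zero =>
    intro k hk
    interval_cases k
    simpa [Ek_zero] using stirling1_self 1
  | succ m IH =>
    intro k hk
    match k with
    | 0 => simpa [Ek_zero] using stirling1_self (m + 2)
    | j + 1 =>
      have hj : j ≤ m := by omega
      have h1 : m + 1 + 1 - (j + 1) = (m - j) + 1 := by omega
      rw [h1, stirling1, Ek_succ]
      rcases eq_or_lt_of_le hj with rfl | hjm
      · rw [show j - j + 1 = j + 1 - j from by omega, IH j le_rfl,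
          show j - j = 0 from by omega, show stirling1 (j + 1) 0 = 0 from rfl,
          Ek_of_gt (show j < j + 1 by omega)]
      · rw [show m - j + 1 = m + 1 - j from by omega, IH j hj,
          show m - j = m + 1 - (j + 1) from by omega, IH (j + 1) (by omega)]

lemma sum_powersetCard_invol (t : Finset ℕ) (φ : ℕ → ℕ)
    (hmem : ∀ x ∈ t, φ x ∈ t) (hinv : ∀ x ∈ t, φ (φ x) = x) (k : ℕ) :
    ∑ s ∈ powersetCard k t, ∏ x ∈ s, φ x = ∑ s ∈ powersetCard k t, ∏ x ∈ s, x := by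
  classical
  have hinj : ∀ s : Finset ℕ, s ⊆ t → Set.InjOn φ s := by
    intro s hs a ha b hb hab
    have := hinv a (hs ha)
    rw [hab, hinv b (hs hb)] at this
    exact this.symm
  refine Finset.sum_nbij' (i := fun s => s.image φ) (j := fun s => s.image φ)
    ?_ ?_ ?_ ?_ ?_
  · intro s hs
    obtain ⟨hsub, hcard⟩ := Finset.mem_powersetCard.1 hs
    exact Finset.mem_powersetCard.2 ⟨fun x hx => by
      obtain ⟨y, hy, rfl⟩ := Finset.mem_image.1 hx
      exact hmem y (hsub hy), by rw [Finset.card_image_of_injOn (hinj s hsub), hcard]⟩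
  · intro s hs
    obtain ⟨hsub, hcard⟩ := Finset.mem_powersetCard.1 hs
    exact Finset.mem_powersetCard.2 ⟨fun x hx => by
      obtain ⟨y, hy, rfl⟩ := Finset.mem_image.1 hx
      exact hmem y (hsub hy), by rw [Finset.card_image_of_injOn (hinj s hsub), hcard]⟩
  · intro s hs
    obtain ⟨hsub, _⟩ := Finset.mem_powersetCard.1 hs
    show (s.image φ).image φ = s
    rw [Finset.image_image]
    calc s.image (φ ∘ φ) = s.image id := Finset.image_congr fun x hx => hinv x (hsub hx)
      _ = s := Finset.image_id
  · intro s hs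
    obtain ⟨hsub, _⟩ := Finset.mem_powersetCard.1 hs
    show (s.image φ).image φ = s
    rw [Finset.image_image]
    calc s.image (φ ∘ φ) = s.image id := Finset.image_congr fun x hx => hinv x (hsub hx)
      _ = s := Finset.image_id
  · intro s hs
    obtain ⟨hsub, _⟩ := Finset.mem_powersetCard.1 hs
    show ∏ x ∈ s, φ x = ∏ x ∈ s.image φ, x
    exact (Finset.prod_image (g := φ) (f := fun x => x)
      fun x hx y hy h => hinj s hsub hx hy h).symm

lemma card_T (n k : ℕ) :
    Nat.card { p : (Fin k → Fin n) × (Fin k → Fin n) //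
        StrictMono p.1 ∧ ∀ i, p.1 i < p.2 i } =
      ∑ s ∈ powersetCard k (range n), ∏ x ∈ s, (n - 1 - x) := by
  classical
  have e : { p : (Fin k → Fin n) × (Fin k → Fin n) //
        StrictMono p.1 ∧ ∀ i, p.1 i < p.2 i } ≃
      Σ f : {f : Fin k → Fin n // StrictMono f}, ∀ i, {y : Fin n // f.1 i < y} :=
    { toFun := fun p => ⟨⟨p.1.1, p.2.1⟩, fun i => ⟨p.1.2 i, p.2.2 i⟩⟩
      invFun := fun q => ⟨(q.1.1, fun i => (q.2 i).1), q.1.2, fun i => (q.2 i).2⟩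
      left_inv := fun _ => rfl
      right_inv := fun _ => rfl }
  rw [Nat.card_congr e, Nat.card_eq_fintype_card, Fintype.card_sigma]
  have hcard : ∀ f : {f : Fin k → Fin n // StrictMono f},
      Fintype.card (∀ i, {y : Fin n // f.1 i < y}) = ∏ i, (n - 1 - (f.1 i : ℕ)) := by
    intro f
    rw [Fintype.card_pi]
    refine Finset.prod_congr rfl fun i _ => ?_
    calc Fintype.card {y : Fin n // f.1 i < y}
        = Fintype.card (Set.Ioi (f.1 i)) :=
          Fintype.card_congr (Equiv.subtypeEquivRight fun y => Iff.rfl)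
      _ = n - 1 - (f.1 i : ℕ) := (Fintype.card_Ioi _).trans (Fin.card_Ioi _)
  rw [Finset.sum_congr rfl fun f _ => hcard f]
  symm
  refine Finset.sum_bij
    (i := fun s hs =>
      (⟨fun idx => ⟨s.orderEmbOfFin (Finset.mem_powersetCard.1 hs).2 idx,
          Finset.mem_range.1 ((Finset.mem_powersetCard.1 hs).1
            (Finset.orderEmbOfFin_mem s _ idx))⟩,
        fun a b hab => Fin.mk_lt_mk.2
          ((s.orderEmbOfFin (Finset.mem_powersetCard.1 hs).2).strictMono hab)⟩ :
        {f : Fin k → Fin n // StrictMono f}))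
    (fun s hs => Finset.mem_univ _) ?_ ?_ ?_
  · -- injectivity
    intro s₁ hs₁ s₂ hs₂ h
    have hfun := congrArg (fun f => fun idx => ((f.1 idx : Fin n) : ℕ)) h
    simp only at hfun
    have hr : Set.range (s₁.orderEmbOfFin (Finset.mem_powersetCard.1 hs₁).2) =
        Set.range (s₂.orderEmbOfFin (Finset.mem_powersetCard.1 hs₂).2) := by
      rw [show ⇑(s₁.orderEmbOfFin (Finset.mem_powersetCard.1 hs₁).2) =
          ⇑(s₂.orderEmbOfFin (Finset.mem_powersetCard.1 hs₂).2) from hfun]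
    rw [Finset.range_orderEmbOfFin, Finset.range_orderEmbOfFin] at hr
    exact_mod_cast Finset.coe_injective hr
  · -- surjectivity
    intro f _
    set s : Finset ℕ := Finset.image (fun idx => ((f.1 idx : Fin n) : ℕ)) Finset.univ with hs_def
    have hinj : Function.Injective (fun idx => ((f.1 idx : Fin n) : ℕ)) :=
      fun a b hab => f.2.injective (Fin.val_injective hab)
    have hcards : s.card = k := by
      rw [hs_def, Finset.card_image_of_injective _ hinj, Finset.card_univ, Fintype.card_fin]
    have hsub : s ⊆ range n := by
      intro x hx
      obtain ⟨idx, _, rfl⟩ := Finset.mem_image.1 hx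
      exact Finset.mem_range.2 (f.1 idx).2
    have hsmem : s ∈ powersetCard k (range n) := Finset.mem_powersetCard.2 ⟨hsub, hcards⟩
    refine ⟨s, hsmem, ?_⟩
    have hmono : StrictMono fun idx => ((f.1 idx : Fin n) : ℕ) := fun a b hab => f.2 hab
    have huniq : (fun idx => ((f.1 idx : Fin n) : ℕ)) =
        ⇑(s.orderEmbOfFin (Finset.mem_powersetCard.1 hsmem).2) :=
      Finset.orderEmbOfFin_unique _ (fun x => Finset.mem_image_of_mem _ (Finset.mem_univ x))
        hmono
    apply Subtype.ext
    funext idx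
    apply Fin.ext
    exact (congrFun huniq idx).symm
  · -- values
    intro s hs
    have h2 := (Finset.mem_powersetCard.1 hs).2
    refine (Finset.prod_nbij (⇑(s.orderEmbOfFin h2))
      (fun idx _ => Finset.orderEmbOfFin_mem s h2 idx)
      (fun a _ b _ hab => (s.orderEmbOfFin h2).injective hab) ?_
      (fun idx _ => rfl)).symm
    intro x hx
    obtain ⟨idx, hidx⟩ := Set.ext_iff.1 (Finset.range_orderEmbOfFin s h2) x
      |>.2 (by exact_mod_cast hx)
    exact ⟨idx, Finset.mem_coe.2 (Finset.mem_univ _), hidx⟩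

theorem stmt16 (n k : ℕ) (hn : 1 ≤ n) (hk : k ≤ n - 1) :
    Nat.card { p : (Fin k → Fin n) × (Fin k → Fin n) //
        StrictMono p.1 ∧ ∀ i, p.1 i < p.2 i } = stirling1 n (n - k) ∧
    Nat.card { p : (Fin k → Fin n) × (Fin k → Fin n) //
        StrictMono p.1 ∧ ∀ i, p.1 i < p.2 i } =
      ∑ s ∈ Finset.powersetCard k (Finset.Icc 1 (n - 1)), ∏ x ∈ s, (n - x) := by
  classical
  obtain ⟨m, rfl⟩ : ∃ m, n = m + 1 := ⟨n - 1, by omega⟩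
  have hkm : k ≤ m := by omega
  have h1 := card_T (m + 1) k
  simp only [Nat.add_sub_cancel] at h1 ⊢
  have h2 : ∑ s ∈ powersetCard k (range (m + 1)), ∏ x ∈ s, (m - x) =
      ∑ s ∈ powersetCard k (range (m + 1)), ∏ x ∈ s, x := by
    refine sum_powersetCard_invol _ (fun x => m - x) ?_ ?_ k
    · intro x hx
      simp only [Finset.mem_range] at hx ⊢
      omega
    · intro x hx
      simp only [Finset.mem_range] at hx
      show m - (m - x) = x
      omega
  have h3 : ∑ s ∈ powersetCard k (range (m + 1)), ∏ x ∈ s, x = Ek m k := by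
    rw [Ek]
    symm
    refine Finset.sum_subset (powersetCard_mono ?_) ?_
    · intro x hx
      simp only [Finset.mem_Icc] at hx
      simp only [Finset.mem_range]
      omega
    · intro s hs hns
      obtain ⟨hsub, hcard⟩ := Finset.mem_powersetCard.1 hs
      have h0 : 0 ∈ s := by
        by_contra h0
        refine hns (Finset.mem_powersetCard.2 ⟨?_, hcard⟩)
        intro x hx
        have hx1 := Finset.mem_range.1 (hsub hx)
        have hx0 : x ≠ 0 := fun e => h0 (e ▸ hx)
        simp only [Finset.mem_Icc]
        omega
      exact Finset.prod_eq_zero h0 rfl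
  have h4 : ∑ s ∈ powersetCard k (Icc 1 m), ∏ x ∈ s, (m + 1 - x) = Ek m k := by
    refine sum_powersetCard_invol _ (fun x => m + 1 - x) ?_ ?_ k
    · intro x hx
      simp only [Finset.mem_Icc] at hx ⊢
      omega
    · intro x hx
      simp only [Finset.mem_Icc] at hx
      show m + 1 - (m + 1 - x) = x
      omega
  refine ⟨?_, ?_⟩
  · rw [h1, h2, h3, ← stirling1_Ek m k hkm]
  · rw [h1, h2, h3, ← h4]
end
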